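/- Let P, P' ⊆ ℝmaxⁿ be tropical polyhedra with mixed constraints defined respectively by the systems A x ⊕ c ≤𝔾 B x ⊕ d and A' x ⊕ c' ≤𝔾 B' x ⊕ d'. Let Q be the set of x ∈ ℝmaxⁿ for which there exist y, y' ∈ ℝmaxⁿ and λ, μ ∈ ℝmax satisfying: xᵢ = max(yᵢ, y'ᵢ) for all i; max(λ, μ) = 0; A y ⊕ λc ≤𝔾 B y ⊕ λd; A' y' ⊕ μc' ≤𝔾 B' y' ⊕ μd'; y₁ ⊕ ⋯ ⊕ yₙ ≤𝔾 (+∞) ⊗ λ; and y'₁ ⊕ ⋯ ⊕ y'ₙ ≤𝔾 (+∞) ⊗ μ. Then Q equals the tropical convex hull of P ∪ P'. -/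

import Mathlib

attribute [local instance] Classical.propDecidable

/-- The germ semiring `𝔾 = ℝmax ∪ {+∞} ∪ ℝ⁻`: `negInf` is `-∞`, `fin a` is the
real number `a` (an element of `ℝmax`), `germ a` is the germ `a̲ ∈ ℝ⁻`, and
`posInf` is `+∞`. -/
inductive TGerm where
  | negInf : TGerm
  | fin : ℝ → TGerm
  | germ : ℝ → TGerm
  | posInf : TGerm

namespace TGerm

/-- The modulus `|x| ∈ ℝmax ∪ {+∞} = EReal` of an element of `𝔾`. -/
noncomputable def modulus : TGerm → EReal
  | negInf => ⊥
  | fin a => (a : EReal)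
  | germ a => (a : EReal)
  | posInf => ⊤

/-- Whether `x` belongs to the copy `ℝ⁻` of perturbed reals. -/
def isPert : TGerm → Bool
  | germ _ => true
  | _ => false

/-- The total order `≤𝔾` on `𝔾`: `x ≤𝔾 y` iff `|x| < |y|` when
`x ∈ ℝmax ∪ {+∞}` and `y ∈ ℝ⁻`, and `|x| ≤ |y|` otherwise. -/
def gle (x y : TGerm) : Prop :=
  if isPert x = false ∧ isPert y = true then modulus x < modulus y
  else modulus x ≤ modulus y

/-- The valuation `x(ε) ∈ ℝmax ∪ {+∞} = EReal` of `x ∈ 𝔾` at `ε`. -/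
noncomputable def val : TGerm → ℝ → EReal
  | negInf, _ => ⊥
  | fin a, _ => (a : EReal)
  | germ a, ε => ((a - ε : ℝ) : EReal)
  | posInf, _ => ⊤

/-- The addition `⊕` of `𝔾`: the maximum with respect to `≤𝔾`. -/
noncomputable def add (x y : TGerm) : TGerm := if gle x y then y else x

/-- The minimum with respect to `≤𝔾`. -/
noncomputable def gmin (x y : TGerm) : TGerm := if gle x y then x else y

/-- The tropical sum `⊕ᵢ f i` of a finite family in `𝔾`. -/
noncomputable def gsum {n : ℕ} (f : Fin n → TGerm) : TGerm :=
  (List.ofFn f).foldr add negInf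

/-- The minimum (w.r.t. `≤𝔾`) of a finite family in `𝔾`. -/
noncomputable def ginf {n : ℕ} (f : Fin n → TGerm) : TGerm :=
  (List.ofFn f).foldr gmin posInf

/-- The multiplication `⊗` of `𝔾`. -/
def mul : TGerm → TGerm → TGerm
  | negInf, _ => negInf
  | _, negInf => negInf
  | posInf, _ => posInf
  | _, posInf => posInf
  | fin a, fin b => fin (a + b)
  | fin a, germ b => germ (a + b)
  | germ a, fin b => germ (a + b)
  | germ a, germ b => germ (a + b)

end TGerm

/-- The embedding of `ℝmax = ℝ ∪ {-∞}` into the germ semiring `𝔾`. -/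
def toGerm (x : WithBot ℝ) : TGerm := WithBot.recBotCoe TGerm.negInf TGerm.fin x

/-- The embedding of `ℝmax = ℝ ∪ {-∞}` into `ℝmax ∪ {+∞} = EReal`. -/
noncomputable def rmaxToEReal (x : WithBot ℝ) : EReal :=
  WithBot.recBotCoe ⊥ (fun a : ℝ => (a : EReal)) x

/-- The tropical convex hull of a subset `G ⊆ ℝmaxⁿ`: all vectors
`λ₁x¹ ⊕ ⋯ ⊕ λ_m x^m` with `x^k ∈ G`, `λ_k ∈ ℝmax` and `max(λ₁, …, λ_m) = 0`. -/
def tconv {n : ℕ} (G : Set (Fin n → WithBot ℝ)) : Set (Fin n → WithBot ℝ) :=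
  { z | ∃ m : ℕ, 0 < m ∧ ∃ (lam : Fin m → WithBot ℝ) (w : Fin m → Fin n → WithBot ℝ),
      (∀ k, w k ∈ G) ∧ Finset.univ.sup lam = 0 ∧
      ∀ i, z i = Finset.univ.sup fun k => lam k + w k i }


section Auxiliary

set_option linter.unreachableTactic false
set_option linter.unusedTactic false
set_option linter.unnecessarySeqFocus false

namespace TGerm

noncomputable def key (x : TGerm) : Lex (EReal × Bool) := toLex (x.modulus, !x.isPert)

lemma key_inj : Function.Injective key := by
  intro x y h
  have h' : x.modulus = y.modulus ∧ x.isPert = y.isPert := by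
    have := congrArg (fun z : Lex (EReal × Bool) => ((ofLex z).1, (ofLex z).2)) h
    simp only [key] at this
    exact ⟨congrArg Prod.fst this, by
      have := congrArg Prod.snd this
      simpa using congrArg Bool.not this⟩
  obtain ⟨h1, h2⟩ := h'
  cases x <;> cases y <;> simp [modulus, isPert] at h1 h2 ⊢ <;>
    first | exact h1 | simp_all

noncomputable instance : LinearOrder TGerm := LinearOrder.lift' key key_inj

lemma le_key {x y : TGerm} : x ≤ y ↔ key x ≤ key y := Iff.rfl

lemma gle_iff_le {x y : TGerm} : gle x y ↔ x ≤ y := by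
  rw [le_key, key, key, Prod.Lex.le_iff, gle]
  rcases hx : x.isPert <;> rcases hy : y.isPert <;>
    simp [hx, hy, le_iff_lt_or_eq] <;> tauto

lemma negInf_le (x : TGerm) : negInf ≤ x := by
  rw [le_key, key, key, Prod.Lex.le_iff]
  cases x <;> simp [modulus, isPert] <;> simp [bot_lt_iff_ne_bot]

lemma le_posInf (x : TGerm) : x ≤ posInf := by
  rw [le_key, key, key, Prod.Lex.le_iff]
  cases x <;> simp [modulus, isPert, lt_top_iff_ne_top]

lemma le_negInf_iff {x : TGerm} : x ≤ negInf ↔ x = negInf :=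
  ⟨fun h => le_antisymm h (negInf_le x), fun h => h ▸ le_refl _⟩

lemma add_eq_max (x y : TGerm) : add x y = max x y := by
  rw [add, max_def]
  simp only [gle_iff_le]
  split_ifs <;> rfl

set_option linter.unreachableTactic false
set_option linter.unusedTactic false

lemma mul_negInf (x : TGerm) : x.mul negInf = negInf := by cases x <;> rfl

lemma negInf_mul (x : TGerm) : negInf.mul x = negInf := by cases x <;> rfl

lemma mul_comm' (x y : TGerm) : x.mul y = y.mul x := by
  cases x <;> cases y <;> simp [mul] <;> ring

lemma mul_assoc' (x y z : TGerm) : (x.mul y).mul z = x.mul (y.mul z) := by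
  cases x <;> cases y <;> cases z <;> simp [mul] <;> ring

lemma fin_zero_mul (x : TGerm) : (fin 0).mul x = x := by
  cases x <;> simp [mul]

lemma mul_mono (x : TGerm) : Monotone x.mul := by
  intro s t h
  rw [← gle_iff_le] at h ⊢
  cases x <;> cases s <;> cases t <;>
    simp_all [mul, gle, isPert, modulus, ← EReal.coe_add, EReal.coe_le_coe_iff,
      EReal.coe_lt_coe_iff] <;>
    linarith

lemma mul_add' (x s t : TGerm) : x.mul (add s t) = add (x.mul s) (x.mul t) := by
  rw [add_eq_max, add_eq_max, (mul_mono x).map_max]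

lemma add_mul' (x s t : TGerm) : (add s t).mul x = add (s.mul x) (t.mul x) := by
  rw [mul_comm', mul_add', mul_comm' x s, mul_comm' x t]

lemma mul_fin_le_iff (l : ℝ) {s t : TGerm} : (fin l).mul s ≤ (fin l).mul t ↔ s ≤ t := by
  refine ⟨fun h => ?_, fun h => mul_mono _ h⟩
  have := mul_mono (fin (-l)) h
  rw [← mul_assoc', ← mul_assoc'] at this
  have e : (fin (-l)).mul (fin l) = fin 0 := by simp [mul]
  rwa [e, fin_zero_mul, fin_zero_mul] at this

lemma foldr_le {l : List TGerm} {z : TGerm} (h : ∀ x ∈ l, x ≤ z) :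
    l.foldr add negInf ≤ z := by
  induction l with
  | nil => exact negInf_le z
  | cons a l ih =>
      simp only [List.foldr_cons, add_eq_max]
      exact max_le (h a (by simp)) (ih fun x hx => h x (by simp [hx]))

lemma le_foldr {l : List TGerm} {x : TGerm} (h : x ∈ l) : x ≤ l.foldr add negInf := by
  induction l with
  | nil => simp at h
  | cons a l ih =>
      simp only [List.foldr_cons, add_eq_max]
      rcases List.mem_cons.mp h with h | h
      · exact h ▸ le_max_left _ _
      · exact le_trans (ih h) (le_max_right _ _)

lemma gsum_le {n : ℕ} {f : Fin n → TGerm} {z : TGerm} (h : ∀ i, f i ≤ z) : gsum f ≤ z :=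
  foldr_le (by simpa [List.mem_ofFn] using fun i => h i)

lemma le_gsum {n : ℕ} (f : Fin n → TGerm) (i : Fin n) : f i ≤ gsum f :=
  le_foldr (by simp [List.mem_ofFn])

lemma gsum_negInf {n : ℕ} : gsum (fun _ : Fin n => negInf) = negInf :=
  le_negInf_iff.mp (gsum_le fun _ => le_refl _)

lemma gsum_mono {n : ℕ} {f g : Fin n → TGerm} (h : ∀ i, f i ≤ g i) : gsum f ≤ gsum g :=
  gsum_le fun i => le_trans (h i) (le_gsum g i)

lemma gsum_add {n : ℕ} (f g : Fin n → TGerm) :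
    gsum (fun j => add (f j) (g j)) = add (gsum f) (gsum g) := by
  rw [add_eq_max]
  refine le_antisymm (gsum_le fun i => ?_) (max_le (gsum_mono fun i => ?_) (gsum_mono fun i => ?_))
  · rw [add_eq_max]
    exact max_le_max (le_gsum f i) (le_gsum g i)
  · rw [add_eq_max]; exact le_max_left _ _
  · rw [add_eq_max]; exact le_max_right _ _

lemma map_gsum {n : ℕ} (φ : TGerm → TGerm) (h0 : φ negInf = negInf)
    (hmax : ∀ u v, φ (add u v) = add (φ u) (φ v)) (f : Fin n → TGerm) :
    φ (gsum f) = gsum fun j => φ (f j) := by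
  have : ∀ l : List TGerm, φ (l.foldr add negInf) = (l.map φ).foldr add negInf := by
    intro l
    induction l with
    | nil => simpa using h0
    | cons a l ih => simp [hmax, ih]
  rw [gsum, this, List.map_ofFn]
  rfl

lemma mul_gsum {n : ℕ} (x : TGerm) (f : Fin n → TGerm) :
    x.mul (gsum f) = gsum fun j => x.mul (f j) :=
  map_gsum x.mul (mul_negInf x) (mul_add' x) f

end TGerm

section ToGermLemmas

lemma toGerm_bot : toGerm ⊥ = TGerm.negInf := rfl

lemma toGerm_coe (a : ℝ) : toGerm (a : WithBot ℝ) = TGerm.fin a := rfl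

lemma toGerm_zero : toGerm (0 : WithBot ℝ) = TGerm.fin 0 := rfl

lemma toGerm_mono : Monotone toGerm := by
  intro a b h
  induction a using WithBot.recBotCoe with
  | bot => exact TGerm.negInf_le _
  | coe a =>
      induction b using WithBot.recBotCoe with
      | bot => simp at h
      | coe b =>
          rw [← TGerm.gle_iff_le]
          simp only [toGerm_coe, TGerm.gle, TGerm.isPert, TGerm.modulus]
          simpa using WithBot.coe_le_coe.mp h

lemma toGerm_max (a b : WithBot ℝ) :
    toGerm (max a b) = TGerm.add (toGerm a) (toGerm b) := by
  rw [TGerm.add_eq_max, toGerm_mono.map_max]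

lemma toGerm_add (a b : WithBot ℝ) :
    toGerm (a + b) = (toGerm a).mul (toGerm b) := by
  induction a using WithBot.recBotCoe with
  | bot => simp [toGerm_bot, TGerm.negInf_mul]
  | coe a =>
      induction b using WithBot.recBotCoe with
      | bot => simp [toGerm_bot, TGerm.mul_negInf, toGerm_coe]
      | coe b =>
          rw [← WithBot.coe_add, toGerm_coe, toGerm_coe, toGerm_coe]
          rfl

lemma toGerm_eq_negInf {a : WithBot ℝ} : toGerm a = TGerm.negInf ↔ a = ⊥ := by
  induction a using WithBot.recBotCoe with
  | bot => simp [toGerm_bot]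
  | coe a => simp [toGerm_coe]

lemma posInf_mul_fin (l : ℝ) : TGerm.posInf.mul (TGerm.fin l) = TGerm.posInf := rfl

lemma posInf_mul_negInf : TGerm.posInf.mul TGerm.negInf = TGerm.negInf := rfl

end ToGermLemmas

section RowMachinery

lemma wb_add_mono (a : WithBot ℝ) : Monotone fun z : WithBot ℝ => a + z :=
  fun _ _ h => add_le_add_right h a

lemma wb_add_max (a u v : WithBot ℝ) : a + max u v = max (a + u) (a + v) :=
  (wb_add_mono a).map_max

lemma wb_cancel (l : ℝ) (z : WithBot ℝ) :
    ((l : ℝ) : WithBot ℝ) + (((-l : ℝ) : WithBot ℝ) + z) = z := by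
  rw [← add_assoc, ← WithBot.coe_add, add_neg_cancel]
  exact zero_add z

/-- The value of an affine row `F ⊙ y ⊕ e`. -/
noncomputable def rowE {n : ℕ} (F : Fin n → TGerm) (e : TGerm) (y : Fin n → WithBot ℝ) : TGerm :=
  TGerm.add (TGerm.gsum fun j => (F j).mul (toGerm (y j))) e

lemma rowE_mul_swap {n : ℕ} (F : Fin n → TGerm) (s : TGerm) (t : Fin n → TGerm) :
    (TGerm.gsum fun j => (F j).mul (s.mul (t j))) = s.mul (TGerm.gsum fun j => (F j).mul (t j)) := by
  rw [TGerm.mul_gsum]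
  congr 1
  funext j
  rw [← TGerm.mul_assoc', TGerm.mul_comm' (F j) s, TGerm.mul_assoc']

lemma rowE_scale {n : ℕ} (F : Fin n → TGerm) (e : TGerm) (l : ℝ) (x : Fin n → WithBot ℝ) :
    rowE F ((TGerm.fin l).mul e) (fun j => ((l : ℝ) : WithBot ℝ) + x j)
      = (TGerm.fin l).mul (rowE F e x) := by
  unfold rowE
  rw [TGerm.mul_add']
  congr 1
  have : (fun j => (F j).mul (toGerm (((l : ℝ) : WithBot ℝ) + x j)))
      = fun j => (F j).mul ((TGerm.fin l).mul (toGerm (x j))) := by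
    funext j; rw [toGerm_add, toGerm_coe]
  rw [this, rowE_mul_swap]

lemma rowE_comb {n : ℕ} (F : Fin n → TGerm) (e₁ e₂ : TGerm) (a b : WithBot ℝ)
    (y₁ y₂ : Fin n → WithBot ℝ) :
    rowE F (TGerm.add ((toGerm a).mul e₁) ((toGerm b).mul e₂))
        (fun j => max (a + y₁ j) (b + y₂ j))
      = TGerm.add ((toGerm a).mul (rowE F e₁ y₁)) ((toGerm b).mul (rowE F e₂ y₂)) := by
  unfold rowE
  have : (fun j => (F j).mul (toGerm (max (a + y₁ j) (b + y₂ j))))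
      = fun j => TGerm.add ((F j).mul ((toGerm a).mul (toGerm (y₁ j))))
          ((F j).mul ((toGerm b).mul (toGerm (y₂ j)))) := by
    funext j
    rw [toGerm_max, toGerm_add, toGerm_add, TGerm.mul_add']
  rw [this, TGerm.gsum_add, rowE_mul_swap, rowE_mul_swap]
  simp only [TGerm.mul_add']
  simp only [TGerm.add_eq_max]
  apply max_max_max_comm

end RowMachinery

section SupHelpers

lemma wb_add_sup {m : ℕ} (a : WithBot ℝ) (f : Fin m → WithBot ℝ) :
    a + Finset.univ.sup f = Finset.univ.sup fun k => a + f k := by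
  exact Finset.comp_sup_eq_sup_comp (fun z => a + z) (wb_add_max a) (WithBot.add_bot a)

lemma sup_fin_one (f : Fin 1 → WithBot ℝ) : Finset.univ.sup f = f 0 := by
  simp [Fin.univ_succ]

lemma sup_fin_succ {m : ℕ} (f : Fin (m + 1) → WithBot ℝ) :
    Finset.univ.sup f = max (f 0) (Finset.univ.sup fun k : Fin m => f k.succ) := by
  rw [Fin.univ_succ, Finset.sup_cons, Finset.sup_map]
  rfl

lemma sup_fin_two (f : Fin 2 → WithBot ℝ) : Finset.univ.sup f = max (f 0) (f 1) := by
  rw [sup_fin_succ]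
  congr 1
  rw [sup_fin_one]
  rfl

end SupHelpers

section SatMachinery

variable {n q : ℕ}

/-- Satisfaction of the (unscaled) mixed system. -/
def Sat (A : Fin q → Fin n → WithBot ℝ) (B : Fin q → Fin n → TGerm)
    (c : Fin q → WithBot ℝ) (d : Fin q → TGerm) (x : Fin n → WithBot ℝ) : Prop :=
  ∀ i, (TGerm.add (TGerm.gsum fun j => (toGerm (A i j)).mul (toGerm (x j)))
          (toGerm (c i))).gle
        (TGerm.add (TGerm.gsum fun j => (B i j).mul (toGerm (x j))) (d i))

/-- Satisfaction of the system scaled by `lam`. -/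
def SatS (A : Fin q → Fin n → WithBot ℝ) (B : Fin q → Fin n → TGerm)
    (c : Fin q → WithBot ℝ) (d : Fin q → TGerm) (lam : WithBot ℝ)
    (y : Fin n → WithBot ℝ) : Prop :=
  ∀ i, (TGerm.add (TGerm.gsum fun j => (toGerm (A i j)).mul (toGerm (y j)))
          ((toGerm lam).mul (toGerm (c i)))).gle
        (TGerm.add (TGerm.gsum fun j => (B i j).mul (toGerm (y j)))
          ((toGerm lam).mul (d i)))

variable {A : Fin q → Fin n → WithBot ℝ} {B : Fin q → Fin n → TGerm}
  {c : Fin q → WithBot ℝ} {d : Fin q → TGerm}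

lemma row_eq (F : Fin n → TGerm) (e : TGerm) (y : Fin n → WithBot ℝ) :
    TGerm.add (TGerm.gsum fun j => (F j).mul (toGerm (y j))) e = rowE F e y := rfl

lemma satS_zero {y : Fin n → WithBot ℝ} : SatS A B c d 0 y ↔ Sat A B c d y := by
  unfold SatS Sat
  simp only [toGerm_zero, TGerm.fin_zero_mul]

lemma satS_bot : SatS A B c d ⊥ (fun _ => ⊥) := by
  intro i
  rw [TGerm.gle_iff_le]
  have h1 : (TGerm.gsum fun j => (toGerm (A i j)).mul (toGerm ((fun _ : Fin n => (⊥ : WithBot ℝ)) j)))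
      = TGerm.negInf := by
    simpa [toGerm_bot, TGerm.mul_negInf] using TGerm.gsum_negInf (n := n)
  have h2 : (toGerm (⊥ : WithBot ℝ)).mul (toGerm (c i)) = TGerm.negInf := TGerm.negInf_mul _
  rw [h1, h2, TGerm.add_eq_max, max_self]
  exact TGerm.negInf_le _

lemma satS_descale {l : ℝ} {y : Fin n → WithBot ℝ}
    (h : SatS A B c d ((l : ℝ) : WithBot ℝ) y) :
    Sat A B c d (fun j => ((-l : ℝ) : WithBot ℝ) + y j) := by
  intro i
  have hy : y = fun j => ((l : ℝ) : WithBot ℝ) + (((-l : ℝ) : WithBot ℝ) + y j) := by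
    funext j; rw [wb_cancel]
  have hi := h i
  rw [TGerm.gle_iff_le] at hi ⊢
  rw [row_eq, row_eq] at hi ⊢
  rw [hy] at hi
  have hg : toGerm ((l : ℝ) : WithBot ℝ) = TGerm.fin l := rfl
  rw [hg, rowE_scale, rowE_scale, TGerm.mul_fin_le_iff] at hi
  exact hi

lemma satS_comb {a b lam₁ lam₂ : WithBot ℝ} {y₁ y₂ : Fin n → WithBot ℝ}
    (h₁ : SatS A B c d lam₁ y₁) (h₂ : SatS A B c d lam₂ y₂) :
    SatS A B c d (max (a + lam₁) (b + lam₂)) (fun j => max (a + y₁ j) (b + y₂ j)) := by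
  intro i
  have hc : ∀ e : TGerm, (toGerm (max (a + lam₁) (b + lam₂))).mul e
      = TGerm.add ((toGerm a).mul ((toGerm lam₁).mul e))
          ((toGerm b).mul ((toGerm lam₂).mul e)) := by
    intro e
    rw [toGerm_max, toGerm_add, toGerm_add, TGerm.add_mul', TGerm.mul_assoc', TGerm.mul_assoc']
  rw [TGerm.gle_iff_le, row_eq, row_eq, hc, hc, rowE_comb, rowE_comb]
  simp only [TGerm.add_eq_max]
  have k₁ := h₁ i
  have k₂ := h₂ i
  rw [TGerm.gle_iff_le, row_eq, row_eq] at k₁ k₂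
  exact max_le_max (TGerm.mul_mono _ k₁) (TGerm.mul_mono _ k₂)

lemma sum_bound_bot {y : Fin n → WithBot ℝ}
    (h : (TGerm.gsum fun i => toGerm (y i)).gle (TGerm.posInf.mul (toGerm (⊥ : WithBot ℝ)))) :
    ∀ i, y i = ⊥ := by
  intro i
  rw [TGerm.gle_iff_le, toGerm_bot, posInf_mul_negInf] at h
  have := le_trans (TGerm.le_gsum (fun i => toGerm (y i)) i) h
  exact toGerm_eq_negInf.mp (TGerm.le_negInf_iff.mp this)

end SatMachinery


lemma tconv_subset {n : ℕ} {G S : Set (Fin n → WithBot ℝ)} (hG : G ⊆ S)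
    (hcomb : ∀ x₁ ∈ S, ∀ x₂ ∈ S, ∀ a b : WithBot ℝ, max a b = 0 →
      (fun i => max (a + x₁ i) (b + x₂ i)) ∈ S) :
    tconv G ⊆ S := by
  have main : ∀ m' : ℕ, ∀ (lam : Fin (m' + 1) → WithBot ℝ)
      (w : Fin (m' + 1) → Fin n → WithBot ℝ), (∀ k, w k ∈ S) → Finset.univ.sup lam = 0 →
      (fun i => Finset.univ.sup fun k => lam k + w k i) ∈ S := by
    intro m'
    induction m' with
    | zero =>
        intro lam w hw hsup
        rw [sup_fin_one] at hsup
        have : (fun i => Finset.univ.sup fun k => lam k + w k i) = w 0 := by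
          funext i
          rw [sup_fin_one, hsup, zero_add]
        rw [this]
        exact hw 0
    | succ m' ih =>
        intro lam w hw hsup
        rw [sup_fin_succ] at hsup
        by_cases ha : (Finset.univ.sup fun k : Fin (m' + 1) => lam k.succ) = ⊥
        · have hall : ∀ k : Fin (m' + 1), lam k.succ = ⊥ := fun k =>
            le_bot_iff.mp (ha ▸ Finset.le_sup (f := fun k : Fin (m' + 1) => lam k.succ)
              (Finset.mem_univ k))
          rw [ha, max_bot_right] at hsup
          have : (fun i => Finset.univ.sup fun k => lam k + w k i) = w 0 := by
            funext i
            rw [sup_fin_succ, hsup, zero_add]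
            have : (Finset.univ.sup fun k : Fin (m' + 1) => lam k.succ + w k.succ i) = ⊥ := by
              refine le_bot_iff.mp (Finset.sup_le fun k _ => ?_)
              rw [hall k, WithBot.bot_add]
            rw [this, max_bot_right]
          rw [this]
          exact hw 0
        · obtain ⟨α, hα⟩ := WithBot.ne_bot_iff_exists.mp ha
          have hsup' : (Finset.univ.sup fun k : Fin (m' + 1) =>
              ((-α : ℝ) : WithBot ℝ) + lam k.succ) = 0 := by
            rw [← wb_add_sup, ← hα, ← WithBot.coe_add, neg_add_cancel]
            rfl
          have hz' := ih (fun k => ((-α : ℝ) : WithBot ℝ) + lam k.succ) (fun k => w k.succ)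
            (fun k => hw _) hsup'
          have hmax : max ((α : ℝ) : WithBot ℝ) (lam 0) = 0 := by
            rw [hα, max_comm]; exact hsup
          have hmem := hcomb _ hz' _ (hw 0) _ _ hmax
          have : (fun i => Finset.univ.sup fun k => lam k + w k i)
              = fun i => max (((α : ℝ) : WithBot ℝ) +
                  Finset.univ.sup fun k : Fin (m' + 1) =>
                    (((-α : ℝ) : WithBot ℝ) + lam k.succ) + w k.succ i) (lam 0 + w 0 i) := by
            funext i
            rw [sup_fin_succ, wb_add_sup]
            rw [max_comm]
            congr 1
            apply Finset.sup_congr rfl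
            intro k _
            rw [add_assoc, wb_cancel]
          rw [this]
          exact hmem
  rintro z ⟨m, hm, lam, w, hw, hsup, hz⟩
  obtain ⟨m', rfl⟩ : ∃ m', m = m' + 1 := ⟨m - 1, (Nat.succ_pred_eq_of_pos hm).symm⟩
  have hz' : z = fun i => Finset.univ.sup fun k => lam k + w k i := funext hz
  rw [hz']
  exact main m' lam w (fun k => hG (hw k)) hsup


end Auxiliary

theorem statement_10 (n p p' : ℕ)
    (A : Fin p → Fin n → WithBot ℝ) (B : Fin p → Fin n → TGerm)
    (c : Fin p → WithBot ℝ) (d : Fin p → TGerm)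
    (A' : Fin p' → Fin n → WithBot ℝ) (B' : Fin p' → Fin n → TGerm)
    (c' : Fin p' → WithBot ℝ) (d' : Fin p' → TGerm) :
    { x : Fin n → WithBot ℝ |
      ∃ (y y' : Fin n → WithBot ℝ) (lam mu : WithBot ℝ),
        (∀ i, x i = max (y i) (y' i)) ∧ max lam mu = 0 ∧
        (∀ i, (TGerm.add (TGerm.gsum fun j => (toGerm (A i j)).mul (toGerm (y j)))
                 ((toGerm lam).mul (toGerm (c i)))).gle
               (TGerm.add (TGerm.gsum fun j => (B i j).mul (toGerm (y j)))
                 ((toGerm lam).mul (d i)))) ∧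
        (∀ i, (TGerm.add (TGerm.gsum fun j => (toGerm (A' i j)).mul (toGerm (y' j)))
                 ((toGerm mu).mul (toGerm (c' i)))).gle
               (TGerm.add (TGerm.gsum fun j => (B' i j).mul (toGerm (y' j)))
                 ((toGerm mu).mul (d' i)))) ∧
        (TGerm.gsum fun i => toGerm (y i)).gle (TGerm.posInf.mul (toGerm lam)) ∧
        (TGerm.gsum fun i => toGerm (y' i)).gle (TGerm.posInf.mul (toGerm mu)) }
    = tconv
        ({ x | ∀ i, (TGerm.add (TGerm.gsum fun j => (toGerm (A i j)).mul (toGerm (x j)))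
                       (toGerm (c i))).gle
                     (TGerm.add (TGerm.gsum fun j => (B i j).mul (toGerm (x j))) (d i)) } ∪
         { x | ∀ i, (TGerm.add (TGerm.gsum fun j => (toGerm (A' i j)).mul (toGerm (x j)))
                       (toGerm (c' i))).gle
                     (TGerm.add (TGerm.gsum fun j => (B' i j).mul (toGerm (x j))) (d' i)) }) := by
  -- names for the two polyhedra and Q
  set P : Set (Fin n → WithBot ℝ) := { x | Sat A B c d x } with hP
  set P' : Set (Fin n → WithBot ℝ) := { x | Sat A' B' c' d' x } with hP'
  have hPeq : ({ x : Fin n → WithBot ℝ |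
      ∀ i, (TGerm.add (TGerm.gsum fun j => (toGerm (A i j)).mul (toGerm (x j)))
             (toGerm (c i))).gle
           (TGerm.add (TGerm.gsum fun j => (B i j).mul (toGerm (x j))) (d i)) }) = P := rfl
  have hPeq' : ({ x : Fin n → WithBot ℝ |
      ∀ i, (TGerm.add (TGerm.gsum fun j => (toGerm (A' i j)).mul (toGerm (x j)))
             (toGerm (c' i))).gle
           (TGerm.add (TGerm.gsum fun j => (B' i j).mul (toGerm (x j))) (d' i)) }) = P' := rfl
  rw [hPeq, hPeq']
  apply Set.Subset.antisymm
  · -- Q ⊆ tconv (P ∪ P')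
    rintro x ⟨y, y', lam, mu, hx, hlm, hy, hy', hsy, hsy'⟩
    induction lam using WithBot.recBotCoe with
    | bot =>
        have hybot : ∀ i, y i = ⊥ := sum_bound_bot hsy
        have hmu : mu = 0 := by rwa [max_bot_left] at hlm
        have hxy' : x = y' := by
          funext i
          rw [hx i, hybot i, max_bot_left]
        have hy'P : y' ∈ P' := by
          rw [hmu] at hy'
          exact satS_zero.mp hy'
        refine ⟨1, one_pos, fun _ => 0, fun _ => y', fun _ => Or.inr hy'P, ?_, ?_⟩
        · rw [sup_fin_one]
        · intro i
          rw [sup_fin_one, zero_add, hxy']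
    | coe l =>
        induction mu using WithBot.recBotCoe with
        | bot =>
            have hy'bot : ∀ i, y' i = ⊥ := sum_bound_bot hsy'
            have hlam : ((l : ℝ) : WithBot ℝ) = 0 := by rwa [max_bot_right] at hlm
            have hxy : x = y := by
              funext i
              rw [hx i, hy'bot i, max_bot_right]
            have hyP : y ∈ P := by
              rw [hlam] at hy
              exact satS_zero.mp hy
            refine ⟨1, one_pos, fun _ => 0, fun _ => y, fun _ => Or.inl hyP, ?_, ?_⟩
            · rw [sup_fin_one]
            · intro i
              rw [sup_fin_one, zero_add, hxy]
        | coe mq =>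
            have hu : (fun j => ((-l : ℝ) : WithBot ℝ) + y j) ∈ P := satS_descale hy
            have hv : (fun j => ((-mq : ℝ) : WithBot ℝ) + y' j) ∈ P' := satS_descale hy'
            refine ⟨2, two_pos, ![((l : ℝ) : WithBot ℝ), ((mq : ℝ) : WithBot ℝ)],
              ![fun j => ((-l : ℝ) : WithBot ℝ) + y j, fun j => ((-mq : ℝ) : WithBot ℝ) + y' j],
              ?_, ?_, ?_⟩
            · intro k
              fin_cases k
              · exact Or.inl hu
              · exact Or.inr hv
            · rw [sup_fin_two]
              simpa using hlm
            · intro i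
              rw [sup_fin_two]
              simp only [Matrix.cons_val_zero, Matrix.cons_val_one, Matrix.head_cons]
              rw [wb_cancel, wb_cancel, hx i]
  · -- tconv (P ∪ P') ⊆ Q
    apply tconv_subset
    · rintro x (hxP | hxP')
      · refine ⟨x, fun _ => ⊥, 0, ⊥, ?_, ?_, ?_, ?_, ?_, ?_⟩
        · intro i; rw [max_bot_right]
        · rw [max_bot_right]
        · exact satS_zero.mpr hxP
        · exact satS_bot
        · rw [TGerm.gle_iff_le, toGerm_zero]
          exact TGerm.le_posInf _
        · rw [TGerm.gle_iff_le, toGerm_bot, posInf_mul_negInf]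
          have : (TGerm.gsum fun i : Fin n => toGerm (⊥ : WithBot ℝ)) = TGerm.negInf := by
            simpa [toGerm_bot] using TGerm.gsum_negInf (n := n)
          rw [this]
      · refine ⟨fun _ => ⊥, x, ⊥, 0, ?_, ?_, ?_, ?_, ?_, ?_⟩
        · intro i; rw [max_bot_left]
        · rw [max_bot_left]
        · exact satS_bot
        · exact satS_zero.mpr hxP'
        · rw [TGerm.gle_iff_le, toGerm_bot, posInf_mul_negInf]
          have : (TGerm.gsum fun i : Fin n => toGerm (⊥ : WithBot ℝ)) = TGerm.negInf := by
            simpa [toGerm_bot] using TGerm.gsum_negInf (n := n)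
          rw [this]
        · rw [TGerm.gle_iff_le, toGerm_zero]
          exact TGerm.le_posInf _
    · rintro x₁ ⟨y₁, y₁', l₁, m₁, hx₁, hlm₁, hy₁, hy₁', hs₁, hs₁'⟩
        x₂ ⟨y₂, y₂', l₂, m₂, hx₂, hlm₂, hy₂, hy₂', hs₂, hs₂'⟩ a b hab
      refine ⟨fun i => max (a + y₁ i) (b + y₂ i), fun i => max (a + y₁' i) (b + y₂' i),
        max (a + l₁) (b + l₂), max (a + m₁) (b + m₂), ?_, ?_, ?_, ?_, ?_, ?_⟩
      · intro i
        dsimp only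
        rw [hx₁ i, hx₂ i, wb_add_max, wb_add_max]
        exact max_max_max_comm _ _ _ _
      · rw [max_max_max_comm, ← wb_add_max, ← wb_add_max, hlm₁, hlm₂, add_zero, add_zero, hab]
      · exact satS_comb hy₁ hy₂
      · exact satS_comb hy₁' hy₂'
      · by_cases hbot : max (a + l₁) (b + l₂) = ⊥
        · obtain ⟨h1, h2⟩ := max_eq_bot.mp hbot
          have hyb : ∀ i, max (a + y₁ i) (b + y₂ i) = ⊥ := by
            intro i
            rw [max_eq_bot]
            constructor
            · rcases WithBot.add_eq_bot.mp h1 with h | h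
              · rw [h, WithBot.bot_add]
              · have hbv := sum_bound_bot (y := y₁) (by rw [← h]; exact hs₁)
                rw [hbv i, WithBot.add_bot]
            · rcases WithBot.add_eq_bot.mp h2 with h | h
              · rw [h, WithBot.bot_add]
              · have hbv := sum_bound_bot (y := y₂) (by rw [← h]; exact hs₂)
                rw [hbv i, WithBot.add_bot]
          rw [TGerm.gle_iff_le, hbot, toGerm_bot, posInf_mul_negInf]
          have : (fun i => toGerm (max (a + y₁ i) (b + y₂ i))) = fun _ : Fin n => TGerm.negInf := by
            funext i; rw [hyb i, toGerm_bot]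
          rw [this, TGerm.gsum_negInf]
        · obtain ⟨lv, hlv⟩ := WithBot.ne_bot_iff_exists.mp hbot
          rw [TGerm.gle_iff_le, ← hlv, toGerm_coe, posInf_mul_fin]
          exact TGerm.le_posInf _
      · by_cases hbot : max (a + m₁) (b + m₂) = ⊥
        · obtain ⟨h1, h2⟩ := max_eq_bot.mp hbot
          have hyb : ∀ i, max (a + y₁' i) (b + y₂' i) = ⊥ := by
            intro i
            rw [max_eq_bot]
            constructor
            · rcases WithBot.add_eq_bot.mp h1 with h | h
              · rw [h, WithBot.bot_add]
              · have hbv := sum_bound_bot (y := y₁') (by rw [← h]; exact hs₁')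
                rw [hbv i, WithBot.add_bot]
            · rcases WithBot.add_eq_bot.mp h2 with h | h
              · rw [h, WithBot.bot_add]
              · have hbv := sum_bound_bot (y := y₂') (by rw [← h]; exact hs₂')
                rw [hbv i, WithBot.add_bot]
          rw [TGerm.gle_iff_le, hbot, toGerm_bot, posInf_mul_negInf]
          have : (fun i => toGerm (max (a + y₁' i) (b + y₂' i))) = fun _ : Fin n => TGerm.negInf := by
            funext i; rw [hyb i, toGerm_bot]
          rw [this, TGerm.gsum_negInf]
        · obtain ⟨lv, hlv⟩ := WithBot.ne_bot_iff_exists.mp hbot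
          rw [TGerm.gle_iff_le, ← hlv, toGerm_coe, posInf_mul_fin]
          exact TGerm.le_posInf _
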